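/- For v ∈ (0, π) and a ≠ 0 with a²·cos(v) + a·sin(v) ≥ 0, the logarithmic derivative bound (d/dv) log f_a(v) ≤ 3/v holds, where f_a(v) = (1 + a·v + a²)·sin(v) − v·cos(v). -/

import Mathlib

lemma aux_p {v : ℝ} (h0 : 0 < v) (hπ : v ≤ Real.pi) :
    0 < Real.sin v - v * Real.cos v := by
  have hmono : StrictMonoOn (fun w : ℝ => Real.sin w - w * Real.cos w)
      (Set.Icc 0 Real.pi) := by
    apply strictMonoOn_of_deriv_pos (convex_Icc 0 Real.pi)
    · fun_prop
    · intro w hw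
      rw [interior_Icc] at hw
      have hd : HasDerivAt (fun w : ℝ => Real.sin w - w * Real.cos w)
          (w * Real.sin w) w := by
        have h3 := (hasDerivAt_id w).mul (Real.hasDerivAt_cos w)
        have := (Real.hasDerivAt_sin w).sub h3
        exact this.congr_deriv (by simp [id_eq])
      rw [hd.deriv]
      exact mul_pos hw.1 (Real.sin_pos_of_pos_of_lt_pi hw.1 hw.2)
  have := hmono (Set.mem_Icc.2 ⟨le_refl 0, Real.pi_pos.le⟩)
      (Set.mem_Icc.2 ⟨h0.le, hπ⟩) h0
  simpa using this

lemma aux_c0 {v : ℝ} (h0 : 0 < v) (hπ : v ≤ Real.pi) :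
    0 ≤ (3 - v ^ 2) * Real.sin v - 3 * v * Real.cos v := by
  have hmono : StrictMonoOn (fun w : ℝ => (3 - w ^ 2) * Real.sin w - 3 * w * Real.cos w)
      (Set.Icc 0 Real.pi) := by
    apply strictMonoOn_of_deriv_pos (convex_Icc 0 Real.pi)
    · fun_prop
    · intro w hw
      rw [interior_Icc] at hw
      have hd : HasDerivAt (fun w : ℝ => (3 - w ^ 2) * Real.sin w - 3 * w * Real.cos w)
          (w * (Real.sin w - w * Real.cos w)) w := by
        have h1 : HasDerivAt (fun w : ℝ => 3 - w ^ 2) (-(2 * w)) w := by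
          simpa using (hasDerivAt_pow 2 w).const_sub 3
        have h2 := h1.mul (Real.hasDerivAt_sin w)
        have h3 : HasDerivAt (fun w : ℝ => 3 * w) 3 w := by
          simpa using (hasDerivAt_id w).const_mul 3
        have h4 := h3.mul (Real.hasDerivAt_cos w)
        exact (h2.sub h4).congr_deriv (by ring)
      rw [hd.deriv]
      exact mul_pos hw.1 (aux_p hw.1 hw.2.le)
  have := hmono (Set.mem_Icc.2 ⟨le_refl 0, Real.pi_pos.le⟩)
      (Set.mem_Icc.2 ⟨h0.le, hπ⟩) h0
  simp only [Real.sin_zero, Real.cos_zero] at this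
  nlinarith [this]

theorem grushin_log_deriv_bound (a v : ℝ) (ha : a ≠ 0)
    (hv : v ∈ Set.Ioo 0 Real.pi)
    (hadm : a ^ 2 * Real.cos v + a * Real.sin v ≥ 0) :
    deriv (fun w : ℝ =>
        Real.log ((1 + a * w + a ^ 2) * Real.sin w - w * Real.cos w)) v
      ≤ 3 / v := by
  obtain ⟨hv0, hvπ⟩ := hv
  have hs : 0 < Real.sin v := Real.sin_pos_of_pos_of_lt_pi hv0 hvπ
  have hp : 0 < Real.sin v - v * Real.cos v := aux_p hv0 hvπ.le
  have hc0 : 0 ≤ (3 - v ^ 2) * Real.sin v - 3 * v * Real.cos v := aux_c0 hv0 hvπ.le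
  -- In the case a < 0, the admissibility condition forces cos v ≥ 0
  have hcos_of_neg : a < 0 → 0 ≤ Real.cos v ∧ a * Real.cos v + Real.sin v ≤ 0 := by
    intro hneg
    have hacs : a * Real.cos v + Real.sin v ≤ 0 := by
      by_contra h
      push_neg at h
      nlinarith [mul_pos (neg_pos.2 hneg) h]
    refine ⟨?_, hacs⟩
    by_contra h
    push_neg at h
    nlinarith [mul_pos (neg_pos.2 hneg) hs, sq_nonneg a,
      mul_pos (mul_pos_of_neg_of_neg hneg hneg) (neg_pos.2 h)]
  have hfpos : 0 < (1 + a * v + a ^ 2) * Real.sin v - v * Real.cos v := by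
    rcases ha.lt_or_gt with hneg | hpos
    · obtain ⟨hc, hacs⟩ := hcos_of_neg hneg
      have hcpos : 0 < Real.cos v := by
        rcases hc.lt_or_eq with h | h
        · exact h
        · exfalso; rw [← h] at hacs; nlinarith
      have hav : a + v ≤ 0 := by nlinarith
      nlinarith [mul_nonneg (mul_nonneg (neg_pos.2 hneg).le (neg_nonneg.2 hav)) hs.le]
    · nlinarith [mul_pos (mul_pos hpos (by linarith : (0:ℝ) < a + v)) hs]
  have hF : HasDerivAt (fun w : ℝ => (1 + a * w + a ^ 2) * Real.sin w - w * Real.cos w)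
      (a * Real.sin v + (1 + a * v + a ^ 2) * Real.cos v - (Real.cos v - v * Real.sin v)) v := by
    have h1 : HasDerivAt (fun w : ℝ => 1 + a * w + a ^ 2) a v := by
      have := (((hasDerivAt_id v).const_mul a).const_add 1).add_const (a ^ 2)
      simpa using this
    have h2 := h1.mul (Real.hasDerivAt_sin v)
    have h3 := (hasDerivAt_id v).mul (Real.hasDerivAt_cos v)
    exact (h2.sub h3).congr_deriv (by simp [id_eq]; ring)
  have hlog := hF.log (ne_of_gt hfpos)
  rw [hlog.deriv, div_le_div_iff₀ hfpos hv0]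
  -- Goal: f'(v) * v ≤ 3 * f(v), i.e. the quadratic inequality in a
  rcases ha.lt_or_gt with hneg | hpos
  · obtain ⟨hc, _⟩ := hcos_of_neg hneg
    nlinarith [mul_nonneg hv0.le hadm, mul_nonneg (sq_nonneg a) hp.le,
      mul_nonneg (mul_nonneg (neg_pos.2 hneg).le (sq_nonneg v)) hc, hc0]
  · nlinarith [mul_nonneg (sq_nonneg a) hs.le, mul_nonneg (sq_nonneg a) hp.le,
      mul_nonneg (mul_nonneg hpos.le hv0.le) hs.le,
      mul_nonneg (mul_nonneg hpos.le hv0.le) hp.le, hc0]
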